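/- Let A and B be n×n real symmetric positive semidefinite matrices. Then the squared operator norm of A − B is at most the operator norm of A² − B²; i.e., ‖A − B‖² ≤ ‖A² − B²‖. -/

import Mathlib

open scoped RealInnerProductSpace

/-- The operator (spectral) norm of a real `n × n` matrix, viewed as the norm of the
associated continuous linear map on Euclidean space. -/
noncomputable def opNorm {n : ℕ} (A : Matrix (Fin n) (Fin n) ℝ) : ℝ :=
  ‖(Matrix.toEuclideanCLM (𝕜 := ℝ) A : EuclideanSpace ℝ (Fin n) →L[ℝ] EuclideanSpace ℝ (Fin n))‖

lemma psd_inner_nonneg {n : ℕ} (B : Matrix (Fin n) (Fin n) ℝ) (hB : B.PosSemidef)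
    (x : EuclideanSpace ℝ (Fin n)) :
    0 ≤ ⟪(Matrix.toEuclideanCLM (𝕜 := ℝ) B) x, x⟫ := by
  have h := hB.dotProduct_mulVec_nonneg (WithLp.ofLp x)
  simp only [PiLp.inner_apply, RCLike.inner_apply, conj_trivial]
  simpa [dotProduct, Matrix.mulVec, mul_comm] using h

lemma selfadj {n : ℕ} (A : Matrix (Fin n) (Fin n) ℝ) (hA : A.IsHermitian) :
    IsSelfAdjoint (Matrix.toEuclideanCLM (𝕜 := ℝ) A) := by
  rw [IsSelfAdjoint, ← map_star]
  congr 1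

lemma aux_eigen {n : ℕ} (A B : Matrix (Fin n) (Fin n) ℝ)
    (hA : A.PosSemidef) (hB : B.PosSemidef) (μ : ℝ) (x : EuclideanSpace ℝ (Fin n))
    (hx : ‖x‖ = 1) (hev : (Matrix.toEuclideanCLM (𝕜 := ℝ) (A - B)) x = μ • x) (hμ : 0 ≤ μ) :
    μ ^ 2 ≤ opNorm (A ^ 2 - B ^ 2) := by
  set φ := Matrix.toEuclideanCLM (𝕜 := ℝ) (n := Fin n) with hφ
  set C := φ (A - B) with hCdef
  set P := φ (A + B) with hPdef
  set D := φ (A ^ 2 - B ^ 2) with hDdef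
  have hC : IsSelfAdjoint C := selfadj _ (hA.1.sub hB.1)
  have e1 : ⟪(P * C) x, x⟫ = μ * ⟪P x, x⟫ := by
    rw [ContinuousLinearMap.mul_apply, hev, map_smul, real_inner_smul_left]
  have e2 : ⟪(C * P) x, x⟫ = μ * ⟪P x, x⟫ := by
    have hsymm : ∀ u v : EuclideanSpace ℝ (Fin n), ⟪C u, v⟫ = ⟪u, C v⟫ :=
      fun u v => hC.isSymmetric u v
    rw [ContinuousLinearMap.mul_apply, hsymm, hev, real_inner_smul_right]
  have hDD : D + D = P * C + C * P := by
    have hmat : (A ^ 2 - B ^ 2) + (A ^ 2 - B ^ 2) = (A + B) * (A - B) + (A - B) * (A + B) := by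
      noncomm_ring
    rw [hCdef, hPdef, hDdef, ← map_add φ, hmat, map_add, map_mul, map_mul]
  have key : ⟪D x, x⟫ = μ * ⟪P x, x⟫ := by
    have h := congrArg (fun T : EuclideanSpace ℝ (Fin n) →L[ℝ] EuclideanSpace ℝ (Fin n) =>
      ⟪T x, x⟫) hDD
    simp only [ContinuousLinearMap.add_apply, inner_add_left, e1, e2] at h
    linarith
  have hCx : ⟪C x, x⟫ = μ := by
    rw [hev, real_inner_smul_left, real_inner_self_eq_norm_sq, hx]; ring
  have hPC : P - C = φ B + φ B := by
    rw [hCdef, hPdef, ← map_sub, ← map_add]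
    congr 1
    abel
  have hge : μ ≤ ⟪P x, x⟫ := by
    have h2 : ⟪P x, x⟫ - ⟪C x, x⟫ = ⟪(φ B) x, x⟫ + ⟪(φ B) x, x⟫ := by
      have := congrArg (fun T : EuclideanSpace ℝ (Fin n) →L[ℝ] EuclideanSpace ℝ (Fin n) =>
        ⟪T x, x⟫) hPC
      simpa [ContinuousLinearMap.sub_apply, ContinuousLinearMap.add_apply,
        inner_sub_left, inner_add_left] using this
    have := psd_inner_nonneg B hB x
    linarith [hCx]
  have hsq : μ ^ 2 ≤ ⟪D x, x⟫ := by
    rw [key]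
    nlinarith
  calc μ ^ 2 ≤ ⟪D x, x⟫ := hsq
    _ ≤ ‖D x‖ * ‖x‖ := real_inner_le_norm _ _
    _ ≤ ‖D‖ * ‖x‖ * ‖x‖ := mul_le_mul_of_nonneg_right (D.le_opNorm x) (norm_nonneg x)
    _ = opNorm (A ^ 2 - B ^ 2) := by rw [hx, mul_one, mul_one]; rfl

/-- For symmetric positive semidefinite matrices `A`, `B`,
`‖A − B‖² ≤ ‖A² − B²‖` in operator norm. -/
theorem opNorm_sub_sq_le_opNorm_sq_sub {n : ℕ} (A B : Matrix (Fin n) (Fin n) ℝ)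
    (hA : A.PosSemidef) (hB : B.PosSemidef) :
    opNorm (A - B) ^ 2 ≤ opNorm (A ^ 2 - B ^ 2) := by
  set φ := Matrix.toEuclideanCLM (𝕜 := ℝ) (n := Fin n) with hφ
  set R := opNorm (A ^ 2 - B ^ 2) with hR
  have hR0 : 0 ≤ R := norm_nonneg _
  have hC : IsSelfAdjoint (φ (A - B)) := selfadj _ (hA.1.sub hB.1)
  have hS : LinearMap.IsSymmetric
      ((φ (A - B) : EuclideanSpace ℝ (Fin n) →L[ℝ] EuclideanSpace ℝ (Fin n)) :
        EuclideanSpace ℝ (Fin n) →ₗ[ℝ] EuclideanSpace ℝ (Fin n)) := hC.isSymmetric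
  have hfin : Module.finrank ℝ (EuclideanSpace ℝ (Fin n)) = n := finrank_euclideanSpace_fin
  set b := hS.eigenvectorBasis hfin with hb
  set ev := hS.eigenvalues hfin with hev
  have happly : ∀ i, φ (A - B) (b i) = ev i • b i := fun i => hS.apply_eigenvectorBasis hfin i
  have hbd : ∀ i, (ev i) ^ 2 ≤ R := by
    intro i
    rcases le_or_gt 0 (ev i) with h | h
    · exact aux_eigen A B hA hB (ev i) (b i) (b.orthonormal.1 i) (happly i) h
    · have hev' : φ (B - A) (b i) = (-ev i) • (b i) := by
        have : (B - A) = -(A - B) := by abel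
        rw [this, map_neg, ContinuousLinearMap.neg_apply, happly i, neg_smul]
      have := aux_eigen B A hB hA (-ev i) (b i) (b.orthonormal.1 i) hev' (by linarith)
      have hRR : opNorm (B ^ 2 - A ^ 2) = R := by
        have : (B ^ 2 - A ^ 2) = -(A ^ 2 - B ^ 2) := by abel
        rw [hR, opNorm, opNorm, this, map_neg, norm_neg]
      rw [neg_sq] at this
      rwa [hRR] at this
  -- norm bound via eigenbasis expansion
  have hnorm : ∀ y : EuclideanSpace ℝ (Fin n), ‖φ (A - B) y‖ ≤ Real.sqrt R * ‖y‖ := by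
    intro y
    have hrep : ∀ i, b.repr (φ (A - B) y) i = ev i * b.repr y i := by
      intro i
      rw [b.repr_apply_apply, b.repr_apply_apply]
      calc ⟪b i, φ (A - B) y⟫ = ⟪φ (A - B) (b i), y⟫ := (hS (b i) y).symm
        _ = ev i * ⟪b i, y⟫ := by rw [happly i, real_inner_smul_left]
    have hsq : ‖φ (A - B) y‖ ^ 2 ≤ R * ‖y‖ ^ 2 := by
      rw [← b.repr.norm_map (φ (A - B) y), ← b.repr.norm_map y]
      rw [EuclideanSpace.norm_eq, EuclideanSpace.norm_eq,
        Real.sq_sqrt (by positivity), Real.sq_sqrt (by positivity)]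
      rw [Finset.mul_sum]
      apply Finset.sum_le_sum
      intro i _
      rw [hrep i]
      have : ‖ev i * b.repr y i‖ ^ 2 = (ev i) ^ 2 * ‖b.repr y i‖ ^ 2 := by
        rw [norm_mul, mul_pow, Real.norm_eq_abs, sq_abs]
      rw [this]
      exact mul_le_mul_of_nonneg_right (hbd i) (by positivity)
    have := Real.sqrt_le_sqrt hsq
    rwa [Real.sqrt_sq (norm_nonneg _), Real.sqrt_mul hR0, Real.sqrt_sq (norm_nonneg _)] at this
  have hop : opNorm (A - B) ≤ Real.sqrt R :=
    ContinuousLinearMap.opNorm_le_bound _ (Real.sqrt_nonneg R) hnorm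
  calc opNorm (A - B) ^ 2 ≤ Real.sqrt R ^ 2 := by
        apply pow_le_pow_left₀ (norm_nonneg _) hop
    _ = R := Real.sq_sqrt hR0
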